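/- Let p >= 2 and q = p/(p-1). For any x in the nonnegative orthant of R^d minus the origin, (sum_{k=1}^d |∂²M_p(x)/∂x_k²|^q)^{1/q} <= 2(p-1)d^{1/p}/M_p(x) + 2(p-1)/M_p(x). -/

import Mathlib

open Real Finset

/-- For `p ≥ 2` and `q = p/(p-1)`, the `ℓ_q`-norm of the diagonal second partial
derivatives of `M_p(x) = (∑ x_j^p)^(1/p)`, namely
`∂²M_p/∂x_k² = (p-1)x_k^(p-2)/M_p^(p-1) − (p-1)x_k^(2p-2)/M_p^(2p-1)`,
is at most `2(p-1)d^(1/p)/M_p(x) + 2(p-1)/M_p(x)`. -/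
theorem lp_second_diagonal_partials_norm (d : ℕ) (p : ℝ) (hp : 2 ≤ p)
    (x : Fin d → ℝ) (hx : ∀ i, 0 ≤ x i) (hx0 : x ≠ 0) :
    (∑ k : Fin d,
        |(p - 1) * (x k) ^ (p - 2) / ((∑ j, (x j) ^ p) ^ (1 / p)) ^ (p - 1)
            - (p - 1) * (x k) ^ (2 * p - 2) / ((∑ j, (x j) ^ p) ^ (1 / p)) ^ (2 * p - 1)|
          ^ (p / (p - 1))) ^ ((p - 1) / p)
      ≤ 2 * (p - 1) * (d : ℝ) ^ (1 / p) / (∑ j, (x j) ^ p) ^ (1 / p)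
          + 2 * (p - 1) / (∑ j, (x j) ^ p) ^ (1 / p) := by
  have hp0 : (0:ℝ) < p := by linarith
  have hp1 : (0:ℝ) < p - 1 := by linarith
  set q : ℝ := p / (p - 1) with hq
  have hq1 : 1 ≤ q := by rw [hq, le_div_iff₀ hp1]; linarith
  have hq0 : 0 < q := by linarith
  have hq2 : q ≤ 2 := by rw [hq, div_le_iff₀ hp1]; linarith
  set S : ℝ := ∑ j, x j ^ p with hSdef
  have hterm : ∀ j, (0:ℝ) ≤ x j ^ p := fun j => rpow_nonneg (hx j) p
  obtain ⟨i0, hi0⟩ := Function.ne_iff.mp hx0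
  have hxi0 : 0 < x i0 := lt_of_le_of_ne (hx i0) (Ne.symm hi0)
  have hS : 0 < S := lt_of_lt_of_le (rpow_pos_of_pos hxi0 p)
    (Finset.single_le_sum (fun j _ => hterm j) (mem_univ i0))
  have hd : 0 < d := i0.pos
  have hd0 : (0:ℝ) < (d:ℝ) := by exact_mod_cast hd
  set M : ℝ := S ^ (1/p) with hMdef
  have hM : 0 < M := rpow_pos_of_pos hS _
  have hMp : M ^ p = S := by
    rw [hMdef, ← Real.rpow_mul hS.le, one_div_mul_cancel hp0.ne', Real.rpow_one]
  have hxM : ∀ k, x k ≤ M := by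
    intro k
    have h1 : x k ^ p ≤ S := Finset.single_le_sum (fun j _ => hterm j) (mem_univ k)
    have h2 : (x k ^ p) ^ (1/p) ≤ S ^ (1/p) := rpow_le_rpow (hterm k) h1 (by positivity)
    rwa [← Real.rpow_mul (hx k), mul_one_div_cancel hp0.ne', Real.rpow_one] at h2
  -- exponent identities
  have hpq' : (p - 1)/p = 1/q := by rw [hq, one_div_div]
  have e1 : (p - 2) * q = p - q := by rw [hq]; field_simp; ring
  have e2 : (p - 1) * q = p := by rw [hq]; field_simp
  have e3 : (2*p - 2) * q = 2*p := by rw [hq]; field_simp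
  have e4 : (2*p - 1) * q = 2*p + q := by rw [hq]; field_simp; ring
  -- the two pieces
  have hAsum : ∑ k, ((p - 1) * x k ^ (p - 2) / M ^ (p - 1)) ^ q
      ≤ ((p - 1) * (d:ℝ) ^ (1/p) / M) ^ q := by
    have hAk : ∀ k, ((p - 1) * x k ^ (p - 2) / M ^ (p - 1)) ^ q
        = (p - 1) ^ q * x k ^ (p - q) / M ^ p := by
      intro k
      rw [Real.div_rpow (mul_nonneg hp1.le (rpow_nonneg (hx k) _)) (rpow_nonneg hM.le _),
        Real.mul_rpow hp1.le (rpow_nonneg (hx k) _),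
        ← Real.rpow_mul (hx k), ← Real.rpow_mul hM.le, e1, e2]
    -- key: ∑ x^(p-q) ≤ d^(q/p) * M^(p-q)
    have hkey : ∑ k, x k ^ (p - q) ≤ (d:ℝ) ^ (q/p) * M ^ (p - q) := by
      rcases eq_or_lt_of_le hq2 with h2 | h2
      · -- q = 2, and then p = 2, p - q = 0
        have hp2 : p = 2 := by
          have : p = 2 * (p - 1) := by
            rw [hq, div_eq_iff hp1.ne'] at h2; linarith
          linarith
        have hq2' : q = 2 := h2
        rw [show p - q = 0 by rw [hp2, hq2']; norm_num,
          show q / p = 1 by rw [hp2, hq2']; norm_num]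
        simp [Real.rpow_zero, Real.rpow_one, Finset.card_univ]
      · -- q < 2 ≤ p, so r := p - q > 0
        have hr : 0 < p - q := by linarith
        have hmean := Real.arith_mean_le_rpow_mean Finset.univ (fun _ => (d:ℝ)⁻¹)
          (fun k => x k ^ (p - q)) (fun i _ => by positivity)
          (by simp [Finset.card_univ]; field_simp)
          (fun i _ => rpow_nonneg (hx i) _)
          (p := p / (p - q)) (by rw [le_div_iff₀ hr]; linarith)
        have hz : ∀ k, (x k ^ (p - q)) ^ (p / (p - q)) = x k ^ p := by
          intro k
          rw [← Real.rpow_mul (hx k)]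
          congr 1
          field_simp
        have hmean2 : (d:ℝ)⁻¹ * ∑ k, x k ^ (p - q)
            ≤ ((d:ℝ)⁻¹ * S) ^ ((p - q)/p) := by
          calc (d:ℝ)⁻¹ * ∑ k, x k ^ (p - q) = ∑ k, (d:ℝ)⁻¹ * x k ^ (p - q) := by
                rw [Finset.mul_sum]
            _ ≤ (∑ k, (d:ℝ)⁻¹ * (x k ^ (p - q)) ^ (p/(p - q))) ^ (1/(p/(p-q))) := hmean
            _ = ((d:ℝ)⁻¹ * S) ^ ((p - q)/p) := by
                rw [one_div_div]
                congr 1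
                rw [hSdef, Finset.mul_sum]
                exact Finset.sum_congr rfl fun k _ => by rw [hz k]
        have hSr : S ^ ((p - q)/p) = M ^ (p - q) := by
          rw [← hMp, ← Real.rpow_mul hM.le]
          congr 1
          field_simp
        have hdr : ((d:ℝ)⁻¹) ^ ((p - q)/p) * (d:ℝ) = (d:ℝ) ^ (q/p) := by
          rw [← Real.rpow_neg_one (d:ℝ), ← Real.rpow_mul hd0.le,
            ← Real.rpow_add_one hd0.ne']
          congr 1
          field_simp
          ring
        calc ∑ k, x k ^ (p - q) = (d:ℝ) * ((d:ℝ)⁻¹ * ∑ k, x k ^ (p - q)) := by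
              field_simp
          _ ≤ (d:ℝ) * ((d:ℝ)⁻¹ * S) ^ ((p - q)/p) := by
              apply mul_le_mul_of_nonneg_left hmean2 hd0.le
          _ = (d:ℝ) ^ (q/p) * M ^ (p - q) := by
              rw [Real.mul_rpow (by positivity) hS.le, hSr, ← hdr]
              ring
    calc ∑ k, ((p - 1) * x k ^ (p - 2) / M ^ (p - 1)) ^ q
        = (p - 1) ^ q / M ^ p * ∑ k, x k ^ (p - q) := by
          rw [Finset.mul_sum]
          exact Finset.sum_congr rfl fun k _ => by rw [hAk k]; ring
      _ ≤ (p - 1) ^ q / M ^ p * ((d:ℝ) ^ (q/p) * M ^ (p - q)) := by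
          apply mul_le_mul_of_nonneg_left hkey (by positivity)
      _ = ((p - 1) * (d:ℝ) ^ (1/p) / M) ^ q := by
          rw [Real.div_rpow (by positivity) hM.le,
            Real.mul_rpow hp1.le (rpow_nonneg hd0.le _),
            ← Real.rpow_mul hd0.le]
          have hMq : M ^ (p - q) * M ^ q = M ^ p := by
            rw [← Real.rpow_add hM]; ring_nf
          have h1 : (1/p) * q = q / p := by ring
          rw [h1]
          field_simp
          rw [← hMq]
  have hBsum : ∑ k, ((p - 1) * x k ^ (2*p - 2) / M ^ (2*p - 1)) ^ q
      ≤ ((p - 1) / M) ^ q := by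
    have hBk : ∀ k, ((p - 1) * x k ^ (2*p - 2) / M ^ (2*p - 1)) ^ q
        = (p - 1) ^ q * (x k ^ p) ^ 2 / M ^ (2*p + q) := by
      intro k
      rw [Real.div_rpow (mul_nonneg hp1.le (rpow_nonneg (hx k) _)) (rpow_nonneg hM.le _),
        Real.mul_rpow hp1.le (rpow_nonneg (hx k) _),
        ← Real.rpow_mul (hx k), ← Real.rpow_mul hM.le, e3, e4]
      congr 2
      rw [show (2:ℝ)*p = p*2 by ring, Real.rpow_mul (hx k), Real.rpow_two]
    calc ∑ k, ((p - 1) * x k ^ (2*p - 2) / M ^ (2*p - 1)) ^ q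
        = (p - 1) ^ q / M ^ (2*p + q) * ∑ k, (x k ^ p) ^ 2 := by
          rw [Finset.mul_sum]
          exact Finset.sum_congr rfl fun k _ => by rw [hBk k]; ring
      _ ≤ (p - 1) ^ q / M ^ (2*p + q) * S ^ 2 := by
          apply mul_le_mul_of_nonneg_left
            (Finset.sum_sq_le_sq_sum_of_nonneg fun j _ => hterm j) (by positivity)
      _ = ((p - 1) / M) ^ q := by
          rw [Real.div_rpow hp1.le hM.le, ← hMp,
            show 2*p + q = p + (p + q) by ring, Real.rpow_add hM, Real.rpow_add hM]
          have h1 : M ^ p ≠ 0 := by positivity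
          have h2 : M ^ q ≠ 0 := by positivity
          field_simp
  -- collapse the two bounds through the outer rpow
  have hfin1 : (∑ k, |(p - 1) * x k ^ (p - 2) / M ^ (p - 1)| ^ q) ^ (1/q)
      ≤ (p - 1) * (d:ℝ) ^ (1/p) / M := by
    have habs : ∀ k, |(p - 1) * x k ^ (p - 2) / M ^ (p - 1)|
        = (p - 1) * x k ^ (p - 2) / M ^ (p - 1) := fun k =>
      abs_of_nonneg (div_nonneg (mul_nonneg hp1.le (rpow_nonneg (hx k) _)) (rpow_nonneg hM.le _))
    simp only [habs]
    have hC : (0:ℝ) ≤ (p - 1) * (d:ℝ) ^ (1/p) / M :=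
      div_nonneg (mul_nonneg hp1.le (rpow_nonneg hd0.le _)) hM.le
    have h := Real.rpow_le_rpow (Finset.sum_nonneg fun k _ => rpow_nonneg
      (div_nonneg (mul_nonneg hp1.le (rpow_nonneg (hx k) _)) (rpow_nonneg hM.le _)) _)
      hAsum (by positivity : (0:ℝ) ≤ 1/q)
    rwa [← Real.rpow_mul hC, mul_one_div_cancel hq0.ne', Real.rpow_one] at h
  have hfin2 : (∑ k, |-((p - 1) * x k ^ (2*p - 2) / M ^ (2*p - 1))| ^ q) ^ (1/q)
      ≤ (p - 1) / M := by
    have habs : ∀ k, |-((p - 1) * x k ^ (2*p - 2) / M ^ (2*p - 1))|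
        = (p - 1) * x k ^ (2*p - 2) / M ^ (2*p - 1) := fun k => by
      rw [abs_neg]
      exact abs_of_nonneg (div_nonneg (mul_nonneg hp1.le (rpow_nonneg (hx k) _)) (rpow_nonneg hM.le _))
    simp only [habs]
    have hC : (0:ℝ) ≤ (p - 1) / M := div_nonneg hp1.le hM.le
    have h := Real.rpow_le_rpow (Finset.sum_nonneg fun k _ => rpow_nonneg
      (div_nonneg (mul_nonneg hp1.le (rpow_nonneg (hx k) _)) (rpow_nonneg hM.le _)) _)
      hBsum (by positivity : (0:ℝ) ≤ 1/q)
    rwa [← Real.rpow_mul hC, mul_one_div_cancel hq0.ne', Real.rpow_one] at h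
  -- Minkowski
  rw [hpq']
  have hmink := Real.Lp_add_le Finset.univ
    (fun k => (p - 1) * x k ^ (p - 2) / M ^ (p - 1))
    (fun k => -((p - 1) * x k ^ (2*p - 2) / M ^ (2*p - 1))) hq1
  simp only [← sub_eq_add_neg] at hmink
  have hchain := le_trans hmink (add_le_add hfin1 hfin2)
  have h1 : (0:ℝ) ≤ (p - 1) * (d:ℝ) ^ (1/p) / M := by positivity
  have h2 : (0:ℝ) ≤ (p - 1) / M := by positivity
  calc (∑ k, |(p - 1) * x k ^ (p - 2) / M ^ (p - 1)
          - (p - 1) * x k ^ (2*p - 2) / M ^ (2*p - 1)| ^ q) ^ (1/q)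
      ≤ (p - 1) * (d:ℝ) ^ (1/p) / M + (p - 1) / M := hchain
    _ ≤ 2 * (p - 1) * (d:ℝ) ^ (1/p) / M + 2 * (p - 1) / M := by
        have : 2 * (p - 1) * (d:ℝ) ^ (1/p) / M = 2 * ((p - 1) * (d:ℝ) ^ (1/p) / M) := by ring
        rw [this, show 2 * (p-1)/M = 2*((p-1)/M) by ring]
        linarith
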